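/- With notation as before, if n − k ≤ k, then the injective map Δ_{n,k} : Gal(L(M[p^n])/L(M[p^k])) → (M[p^{n−k}])^m, Δ(σ) = (σ(x_i) ⊖ x_i)_i, is a group homomorphism. -/

import Mathlib

/-- With `M` the module of `p`-power torsion points of a formal group over the
ring of integers of `L` inside `L'` (realized by `ι : M → L'` and a Galois action `act`
compatible with `ι`), `x₁, …, x_m ∈ M[pⁿ]`, and `σ, τ` elements of `Gal(L'/L)` fixing
`M[p^k]` pointwise: if `n − k ≤ k`, then the differences `Δ(σ)ᵢ = σ(xᵢ) ⊖ xᵢ` lie in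
`M[p^{n−k}]` and `Δ` is a group homomorphism, i.e. `Δ(στ)ᵢ = Δ(σ)ᵢ + Δ(τ)ᵢ`. -/
theorem stmt4 (L L' : Type) [Field L] [Field L'] [Algebra L L']
    (M : Type) [AddCommGroup M] (ι : M → L') (hι : Function.Injective ι)
    (act : (L' ≃ₐ[L] L') →* Multiplicative (AddAut M))
    (hact : ∀ σ x, ι (Multiplicative.toAdd (act σ) x) = σ (ι x))
    (p n k m : ℕ) (hp : p.Prime) (hkn : k ≤ n) (hnk : n - k ≤ k)
    (x : Fin m → M) (hx : ∀ i, (p ^ n : ℕ) • x i = 0)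
    (σ τ : L' ≃ₐ[L] L')
    (hσ : ∀ y : M, (p ^ k : ℕ) • y = 0 → Multiplicative.toAdd (act σ) y = y)
    (hτ : ∀ y : M, (p ^ k : ℕ) • y = 0 → Multiplicative.toAdd (act τ) y = y) :
    (∀ i, (p ^ (n - k) : ℕ) • (Multiplicative.toAdd (act σ) (x i) - x i) = 0) ∧
    (∀ i, Multiplicative.toAdd (act (σ * τ)) (x i) - x i =
      (Multiplicative.toAdd (act σ) (x i) - x i) + (Multiplicative.toAdd (act τ) (x i) - x i)) := by
  have key : ∀ ρ : L' ≃ₐ[L] L', (∀ y : M, (p ^ k : ℕ) • y = 0 → Multiplicative.toAdd (act ρ) y = y) →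
      ∀ i, (p ^ (n - k) : ℕ) • (Multiplicative.toAdd (act ρ) (x i) - x i) = 0 := by
    intro ρ hρ i
    have h1 : (p ^ k : ℕ) • ((p ^ (n - k) : ℕ) • x i) = 0 := by
      rw [smul_smul, ← pow_add, Nat.add_sub_cancel' hkn]
      exact hx i
    have h2 := hρ _ h1
    rw [map_nsmul] at h2
    rw [smul_sub, h2]
    simp
  have hσ' := key σ hσ
  refine ⟨hσ', fun i => ?_⟩
  have hτx : (p ^ k : ℕ) • (Multiplicative.toAdd (act τ) (x i) - x i) = 0 := by
    have := key τ hτ i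
    calc (p ^ k : ℕ) • (Multiplicative.toAdd (act τ) (x i) - x i)
        = (p ^ (k - (n - k)) : ℕ) • ((p ^ (n - k) : ℕ) • (Multiplicative.toAdd (act τ) (x i) - x i)) := by
          rw [smul_smul, ← pow_add, Nat.sub_add_cancel hnk]
      _ = 0 := by rw [this, smul_zero]
  have hfix := hσ _ hτx
  rw [map_sub] at hfix
  have : Multiplicative.toAdd (act (σ * τ)) (x i) = Multiplicative.toAdd (act σ) (Multiplicative.toAdd (act τ) (x i)) := by rw [map_mul]; rfl
  rw [this]
  have : Multiplicative.toAdd (act σ) (Multiplicative.toAdd (act τ) (x i)) - Multiplicative.toAdd (act σ) (x i) = Multiplicative.toAdd (act τ) (x i) - x i := hfix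
  linear_combination (norm := abel) this
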